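/- Let n = pq for distinct odd primes p, q, with n ∤ 2^l + 1 for all l ≥ 1, p ∤ 2^l + 1 for all l ≥ 1, and q ∤ 2^l + 1 for all l ≥ 1. Then neither the 2-cyclotomic coset C_p nor C_q modulo n is closed under negation. -/
import Mathlib


/-- The 2-cyclotomic coset modulo `n` containing `i`. -/
def cyclotomicCoset (n : ℕ) (i : ZMod n) : Set (ZMod n) :=
  {x | ∃ j : ℕ, x = i * 2 ^ j}

lemma neg_notMem_aux (p q : ℕ) (hp : p.Prime) (hq : q.Prime) (hqo : Odd q)
    (hqd : ∀ l : ℕ, 1 ≤ l → ¬ (q ∣ 2 ^ l + 1)) :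
    ¬ (-(p : ZMod (p * q)) ∈ cyclotomicCoset (p * q) (p : ZMod (p * q))) := by
  rintro ⟨j, hj⟩
  haveI : NeZero (p * q) := ⟨Nat.mul_ne_zero hp.pos.ne' hq.pos.ne'⟩
  have h0 : ((p * (2 ^ j + 1) : ℕ) : ZMod (p * q)) = 0 := by
    push_cast
    rw [mul_add, mul_one, ← hj]
    ring
  have hdvd : p * q ∣ p * (2 ^ j + 1) := (ZMod.natCast_eq_zero_iff _ _).mp h0
  have hq2 : q ∣ 2 ^ j + 1 := (mul_dvd_mul_iff_left hp.pos.ne').mp hdvd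
  rcases Nat.eq_zero_or_pos j with rfl | hj1
  · norm_num at hq2
    have := (Nat.prime_dvd_prime_iff_eq hq Nat.prime_two).mp hq2
    simp [this, Nat.odd_iff] at hqo
  · exact hqd j hj1 hq2

theorem cyclotomicCoset_p_q_not_neg_closed (p q : ℕ) (hp : p.Prime) (hq : q.Prime)
    (hpo : Odd p) (hqo : Odd q) (hpq : p ≠ q)
    (hn : ∀ l : ℕ, 1 ≤ l → ¬ (p * q ∣ 2 ^ l + 1))
    (hpd : ∀ l : ℕ, 1 ≤ l → ¬ (p ∣ 2 ^ l + 1))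
    (hqd : ∀ l : ℕ, 1 ≤ l → ¬ (q ∣ 2 ^ l + 1)) :
    ¬ (∀ x ∈ cyclotomicCoset (p * q) (p : ZMod (p * q)),
        -x ∈ cyclotomicCoset (p * q) (p : ZMod (p * q))) ∧
    ¬ (∀ x ∈ cyclotomicCoset (p * q) (q : ZMod (p * q)),
        -x ∈ cyclotomicCoset (p * q) (q : ZMod (p * q))) := by
  have hmemp : (p : ZMod (p * q)) ∈ cyclotomicCoset (p * q) (p : ZMod (p * q)) :=
    ⟨0, by simp⟩
  have hmemq : (q : ZMod (p * q)) ∈ cyclotomicCoset (p * q) (q : ZMod (p * q)) :=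
    ⟨0, by simp⟩
  constructor
  · intro h
    exact neg_notMem_aux p q hp hq hqo hqd (h _ hmemp)
  · intro h
    have := neg_notMem_aux q p hq hp hpo hpd
    rw [mul_comm] at this
    exact this (h _ hmemq)
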